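/- Let X and Y be stochastic processes on an open interval I that are both mean square differentiable (differentiable in the L²(Ω) sense) at t₀ ∈ I. Then the product process XY is differentiable at t₀ in the L¹(Ω) sense, and (XY)'(t₀) = X'(t₀)Y(t₀) + X(t₀)Y'(t₀). -/

import Mathlib

open MeasureTheory Filter Set
open scoped NNReal ENNReal

lemma holder_one_two {Ω : Type*} [MeasurableSpace Ω] {P : Measure Ω}
    {f g : Ω → ℝ} (hf : AEStronglyMeasurable f P) (hg : AEStronglyMeasurable g P) :
    eLpNorm (fun ω => f ω * g ω) 1 P ≤ eLpNorm f 2 P * eLpNorm g 2 P := by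
  have h := eLpNorm_smul_le_mul_eLpNorm (r := 1) (p := 2) (q := 2) hg hf
    (hpqr := ⟨by simp [one_div, ENNReal.inv_two_add_inv_two]⟩)
  exact h

lemma aesm_div_const {Ω : Type*} [MeasurableSpace Ω] {P : Measure Ω}
    {f : Ω → ℝ} (hf : AEStronglyMeasurable f P) (c : ℝ) :
    AEStronglyMeasurable (fun ω => f ω / c) P := by
  simpa [div_eq_mul_inv] using hf.mul_const c⁻¹

lemma memL1_mul {Ω : Type*} [MeasurableSpace Ω] {P : Measure Ω}
    {f g : Ω → ℝ} (hf : MemLp f 2 P) (hg : MemLp g 2 P) :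
    MemLp (fun ω => f ω * g ω) 1 P := by
  have := MemLp.smul (r := 1) (p := 2) (q := 2) hg hf
    (hpqr := ⟨by simp [one_div, ENNReal.inv_two_add_inv_two]⟩)
  exact this

/-- If the processes `X` and `Y` are mean square (`L²`) differentiable at `t₀ ∈ I`, then the
product `XY` is `L¹` differentiable at `t₀`, with derivative `X'(t₀)Y(t₀) + X(t₀)Y'(t₀)`. -/
theorem product_L1_differentiable
    {Ω : Type*} [MeasurableSpace Ω] (P : Measure Ω) [IsProbabilityMeasure P]
    (I : Set ℝ) (hI : IsOpen I) (t₀ : ℝ) (ht₀ : t₀ ∈ I)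
    (X Y : ℝ → Ω → ℝ) (X' Y' : Ω → ℝ)
    (hX : ∀ t ∈ I, MemLp (X t) 2 P) (hY : ∀ t ∈ I, MemLp (Y t) 2 P)
    (hX' : MemLp X' 2 P) (hY' : MemLp Y' 2 P)
    (hXd : Tendsto (fun h : ℝ =>
        eLpNorm (fun ω => (X (t₀ + h) ω - X t₀ ω) / h - X' ω) 2 P)
      (nhdsWithin 0 {0}ᶜ) (nhds 0))
    (hYd : Tendsto (fun h : ℝ =>
        eLpNorm (fun ω => (Y (t₀ + h) ω - Y t₀ ω) / h - Y' ω) 2 P)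
      (nhdsWithin 0 {0}ᶜ) (nhds 0)) :
    MemLp (fun ω => X' ω * Y t₀ ω + X t₀ ω * Y' ω) 1 P ∧
    Tendsto (fun h : ℝ =>
        eLpNorm (fun ω => (X (t₀ + h) ω * Y (t₀ + h) ω - X t₀ ω * Y t₀ ω) / h
          - (X' ω * Y t₀ ω + X t₀ ω * Y' ω)) 1 P)
      (nhdsWithin 0 {0}ᶜ) (nhds 0) := by
  constructor
  · exact (memL1_mul hX' (hY t₀ ht₀)).add (memL1_mul (hX t₀ ht₀) hY')
  set L : Filter ℝ := nhdsWithin 0 {0}ᶜ with hL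
  -- abbreviations
  set dX : ℝ → ℝ≥0∞ := fun h =>
    eLpNorm (fun ω => (X (t₀ + h) ω - X t₀ ω) / h - X' ω) 2 P with hdXdef
  set dY : ℝ → ℝ≥0∞ := fun h =>
    eLpNorm (fun ω => (Y (t₀ + h) ω - Y t₀ ω) / h - Y' ω) 2 P with hdYdef
  set eY : ℝ → ℝ≥0∞ := fun h =>
    eLpNorm (fun ω => Y (t₀ + h) ω - Y t₀ ω) 2 P with heYdef
  -- eventual facts
  have hmem : ∀ᶠ h in L, t₀ + h ∈ I := by
    have hc : Tendsto (fun h : ℝ => t₀ + h) (nhds 0) (nhds (t₀ + 0)) :=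
      tendsto_const_nhds.add tendsto_id
    rw [add_zero] at hc
    exact (hc.mono_left nhdsWithin_le_nhds).eventually (hI.eventually_mem ht₀)
  have hne : ∀ᶠ h in L, h ≠ 0 := by
    filter_upwards [self_mem_nhdsWithin] with h hh
    simpa using hh
  have henorm : Tendsto (fun h : ℝ => (‖h‖₊ : ℝ≥0∞)) L (nhds 0) := by
    have h1 : Tendsto (fun h : ℝ => (‖h‖₊ : ℝ≥0∞)) (nhds 0) (nhds 0) := by
      have : Continuous fun h : ℝ => (‖h‖₊ : ℝ≥0∞) :=
        ENNReal.continuous_coe.comp continuous_nnnorm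
      simpa using this.tendsto (0 : ℝ)
    exact h1.mono_left nhdsWithin_le_nhds
  -- `eY` tends to 0
  have heYle : ∀ᶠ h in L, eY h ≤ (‖h‖₊ : ℝ≥0∞) * (dY h + eLpNorm Y' 2 P) := by
    filter_upwards [hmem, hne] with h hm hn
    have hrw : (fun ω => Y (t₀ + h) ω - Y t₀ ω)
        = h • (fun ω => (Y (t₀ + h) ω - Y t₀ ω) / h) := by
      funext ω
      simp only [Pi.smul_apply, smul_eq_mul]
      field_simp
    have hAESM1 : AEStronglyMeasurable (fun ω => (Y (t₀ + h) ω - Y t₀ ω) / h - Y' ω) P :=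
      (aesm_div_const ((hY _ hm).aestronglyMeasurable.sub
        (hY t₀ ht₀).aestronglyMeasurable) h).sub hY'.aestronglyMeasurable
    have hrw2 : (fun ω => (Y (t₀ + h) ω - Y t₀ ω) / h)
        = fun ω => ((Y (t₀ + h) ω - Y t₀ ω) / h - Y' ω) + Y' ω := by
      funext ω; ring
    calc eY h = (‖h‖₊ : ℝ≥0∞) * eLpNorm (fun ω => (Y (t₀ + h) ω - Y t₀ ω) / h) 2 P := by
          show eLpNorm (fun ω => Y (t₀ + h) ω - Y t₀ ω) 2 P = _
          rw [hrw, eLpNorm_const_smul, enorm_eq_nnnorm]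
      _ ≤ (‖h‖₊ : ℝ≥0∞) * (dY h + eLpNorm Y' 2 P) := by
          apply mul_le_mul_right
          rw [hrw2]
          exact eLpNorm_add_le hAESM1 hY'.aestronglyMeasurable one_le_two
  have heY : Tendsto eY L (nhds 0) := by
    have hub : Tendsto (fun h : ℝ => (‖h‖₊ : ℝ≥0∞) * (dY h + eLpNorm Y' 2 P)) L (nhds 0) := by
      have h2 : Tendsto (fun h => dY h + eLpNorm Y' 2 P) L (nhds (0 + eLpNorm Y' 2 P)) :=
        hYd.add tendsto_const_nhds
      have := ENNReal.Tendsto.mul henorm (Or.inr (by simp [hY'.eLpNorm_ne_top]))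
        h2 (Or.inr (by simp))
      simpa using this
    exact tendsto_of_tendsto_of_tendsto_of_le_of_le' tendsto_const_nhds hub
      (Eventually.of_forall fun _ => zero_le) heYle
  -- the key bound
  have key : ∀ᶠ h in L,
      eLpNorm (fun ω => (X (t₀ + h) ω * Y (t₀ + h) ω - X t₀ ω * Y t₀ ω) / h
          - (X' ω * Y t₀ ω + X t₀ ω * Y' ω)) 1 P
        ≤ dX h * (eLpNorm (Y t₀) 2 P + eY h) + eLpNorm X' 2 P * eY h
          + eLpNorm (X t₀) 2 P * dY h := by
    filter_upwards [hmem, hne] with h hm hn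
    set A : Ω → ℝ := fun ω => ((X (t₀ + h) ω - X t₀ ω) / h - X' ω) * Y (t₀ + h) ω with hAdef
    set B : Ω → ℝ := fun ω => X' ω * (Y (t₀ + h) ω - Y t₀ ω) with hBdef
    set C : Ω → ℝ := fun ω => X t₀ ω * ((Y (t₀ + h) ω - Y t₀ ω) / h - Y' ω) with hCdef
    have hAESMX : AEStronglyMeasurable (fun ω => (X (t₀ + h) ω - X t₀ ω) / h - X' ω) P :=
      (aesm_div_const ((hX _ hm).aestronglyMeasurable.sub
        (hX t₀ ht₀).aestronglyMeasurable) h).sub hX'.aestronglyMeasurable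
    have hAESMY : AEStronglyMeasurable (fun ω => (Y (t₀ + h) ω - Y t₀ ω) / h - Y' ω) P :=
      (aesm_div_const ((hY _ hm).aestronglyMeasurable.sub
        (hY t₀ ht₀).aestronglyMeasurable) h).sub hY'.aestronglyMeasurable
    have hA : AEStronglyMeasurable A P := hAESMX.mul (hY _ hm).aestronglyMeasurable
    have hB : AEStronglyMeasurable B P :=
      hX'.aestronglyMeasurable.mul ((hY _ hm).sub (hY t₀ ht₀)).aestronglyMeasurable
    have hC : AEStronglyMeasurable C P := (hX t₀ ht₀).aestronglyMeasurable.mul hAESMY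
    have hsplit : (fun ω => (X (t₀ + h) ω * Y (t₀ + h) ω - X t₀ ω * Y t₀ ω) / h
          - (X' ω * Y t₀ ω + X t₀ ω * Y' ω)) = fun ω => (A ω + B ω) + C ω := by
      funext ω
      rw [hAdef, hBdef, hCdef]
      field_simp
      ring
    rw [hsplit]
    have hY2 : eLpNorm (Y (t₀ + h)) 2 P ≤ eLpNorm (Y t₀) 2 P + eY h := by
      have hrw : Y (t₀ + h) = fun ω => Y t₀ ω + (Y (t₀ + h) ω - Y t₀ ω) := by
        funext ω; ring
      calc eLpNorm (Y (t₀ + h)) 2 P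
          = eLpNorm (fun ω => Y t₀ ω + (Y (t₀ + h) ω - Y t₀ ω)) 2 P := by rw [← hrw]
        _ ≤ eLpNorm (Y t₀) 2 P + eY h :=
            eLpNorm_add_le (hY t₀ ht₀).aestronglyMeasurable
              ((hY _ hm).sub (hY t₀ ht₀)).aestronglyMeasurable one_le_two
    calc eLpNorm (fun ω => (A ω + B ω) + C ω) 1 P
        ≤ eLpNorm (fun ω => A ω + B ω) 1 P + eLpNorm C 1 P :=
          eLpNorm_add_le (hA.add hB) hC le_rfl
      _ ≤ (eLpNorm A 1 P + eLpNorm B 1 P) + eLpNorm C 1 P :=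
          add_le_add_left (eLpNorm_add_le hA hB le_rfl) _
      _ ≤ (dX h * eLpNorm (Y (t₀ + h)) 2 P + eLpNorm X' 2 P * eY h)
            + eLpNorm (X t₀) 2 P * dY h := by
          gcongr
          · exact holder_one_two hAESMX (hY _ hm).aestronglyMeasurable
          · exact holder_one_two hX'.aestronglyMeasurable
              ((hY _ hm).sub (hY t₀ ht₀)).aestronglyMeasurable
          · exact holder_one_two (hX t₀ ht₀).aestronglyMeasurable hAESMY
      _ ≤ dX h * (eLpNorm (Y t₀) 2 P + eY h) + eLpNorm X' 2 P * eY h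
            + eLpNorm (X t₀) 2 P * dY h := by gcongr
  -- the upper bound tends to 0
  have hF : Tendsto (fun h => dX h * (eLpNorm (Y t₀) 2 P + eY h) + eLpNorm X' 2 P * eY h
      + eLpNorm (X t₀) 2 P * dY h) L (nhds 0) := by
    have h1 : Tendsto (fun h => dX h * (eLpNorm (Y t₀) 2 P + eY h)) L (nhds 0) := by
      have h2 : Tendsto (fun h => eLpNorm (Y t₀) 2 P + eY h) L
          (nhds (eLpNorm (Y t₀) 2 P + 0)) := tendsto_const_nhds.add heY
      have := ENNReal.Tendsto.mul hXd
        (Or.inr (by simp [(hY t₀ ht₀).eLpNorm_ne_top])) h2 (Or.inr (by simp))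
      simpa using this
    have h3 : Tendsto (fun h => eLpNorm X' 2 P * eY h) L (nhds 0) := by
      have := ENNReal.Tendsto.const_mul (a := eLpNorm X' 2 P) heY
        (Or.inr hX'.eLpNorm_ne_top)
      simpa using this
    have h4 : Tendsto (fun h => eLpNorm (X t₀) 2 P * dY h) L (nhds 0) := by
      have := ENNReal.Tendsto.const_mul (a := eLpNorm (X t₀) 2 P) hYd
        (Or.inr (hX t₀ ht₀).eLpNorm_ne_top)
      simpa using this
    have := (h1.add h3).add h4
    simpa using this
  exact tendsto_of_tendsto_of_tendsto_of_le_of_le' tendsto_const_nhds hF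
    (Eventually.of_forall fun _ => zero_le) key
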